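/- Let ((c̄,b̄),x̄) be in the graph of the argmin mapping S and assume 0_n ∉ conv{a_i : i ∈ I_{b̄}(x̄)}. Then for every D ∈ L_{c̄,b̄}(x̄) there exists a sequence {c^r}_{r∈ℕ} ⊂ ℝ^n converging to c̄ such that for every r, ((c^r, b̄), x̄) ∈ gph S and D ∈ M_{c^r, b̄}(x̄). Consequently, L_{c̄,b̄}(x̄) equals the Painlevé–Kuratowski upper limit of M_{c,b}(x) as ((c,b),x) → ((c̄,b̄),x̄) within gph S, where the limit is taken in the discrete space of subsets of {1,…,m}. -/

import Mathlib

open Matrix Set Topology Filter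
open scoped ENNReal

namespace QPLip

variable {n m : ℕ}

/-- The quadratic objective function `(1/2) xᵀQx + cᵀx`. -/
noncomputable def obj (Q : Matrix (Fin n) (Fin n) ℝ) (c x : Fin n → ℝ) : ℝ :=
  (1 / 2) * (x ⬝ᵥ Q.mulVec x) + c ⬝ᵥ x

/-- The feasible set `F(b) = {x : aᵢ'x ≤ bᵢ, i = 1,…,m}`. -/
def Feas (A : Matrix (Fin m) (Fin n) ℝ) (b : Fin m → ℝ) : Set (Fin n → ℝ) :=
  {x | ∀ i, A i ⬝ᵥ x ≤ b i}

/-- The argmin (optimal set) mapping `S(c,b)`. -/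
noncomputable def argminSet (Q : Matrix (Fin n) (Fin n) ℝ) (A : Matrix (Fin m) (Fin n) ℝ)
    (c : Fin n → ℝ) (b : Fin m → ℝ) : Set (Fin n → ℝ) :=
  {x | x ∈ Feas A b ∧ ∀ y ∈ Feas A b, obj Q c x ≤ obj Q c y}

/-- The active index set `I_b(x)`. -/
def activeIdx (A : Matrix (Fin m) (Fin n) ℝ) (b : Fin m → ℝ) (x : Fin n → ℝ) : Set (Fin m) :=
  {i | A i ⬝ᵥ x = b i}

/-- Conical convex hull of `{aᵢ : i ∈ D}` (equal to `{0}` when `D = ∅`). -/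
def coneOf (A : Matrix (Fin m) (Fin n) ℝ) (D : Finset (Fin m)) : Set (Fin n → ℝ) :=
  {v | ∃ lam : Fin m → ℝ, (∀ i, 0 ≤ lam i) ∧ v = ∑ i ∈ D, lam i • A i}

/-- The family `M_{c,b}(x)` of minimal KKT sets of indices at `((c,b),x)`. -/
def MinKKT (Q : Matrix (Fin n) (Fin n) ℝ) (A : Matrix (Fin m) (Fin n) ℝ)
    (c : Fin n → ℝ) (b : Fin m → ℝ) (x : Fin n → ℝ) : Set (Finset (Fin m)) :=
  {D | ↑D ⊆ activeIdx A b x ∧ -(Q.mulVec x + c) ∈ coneOf A D ∧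
    ∀ D' : Finset (Fin m), D' ⊂ D → -(Q.mulVec x + c) ∉ coneOf A D'}

/-- The extended family `L_{c,b}(x)` of KKT subsets of indices. -/
def ExtKKT (Q : Matrix (Fin n) (Fin n) ℝ) (A : Matrix (Fin m) (Fin n) ℝ)
    (c : Fin n → ℝ) (b : Fin m → ℝ) (x : Fin n → ℝ) : Set (Finset (Fin m)) :=
  {D | ↑D ⊆ activeIdx A b x ∧ LinearIndependent ℝ (fun i : D => A i.1) ∧
    -(Q.mulVec x + c) ∈ coneOf A D}

/-- Slater constraint qualification at `b`. -/
def Slater (A : Matrix (Fin m) (Fin n) ℝ) (b : Fin m → ℝ) : Prop :=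
  ∃ y : Fin n → ℝ, ∀ i, A i ⬝ᵥ y < b i

/-- The Nürnberger condition at `((c,b),x)`. -/
def NCond (Q : Matrix (Fin n) (Fin n) ℝ) (A : Matrix (Fin m) (Fin n) ℝ)
    (c : Fin n → ℝ) (b : Fin m → ℝ) (x : Fin n → ℝ) : Prop :=
  Slater A b ∧ ∀ D : Finset (Fin m), ↑D ⊆ activeIdx A b x →
    -(Q.mulVec x + c) ∈ coneOf A D → n ≤ D.card

/-- The submatrix `A_D` of `A` formed by the rows indexed by `D`. -/
def subA (A : Matrix (Fin m) (Fin n) ℝ) (D : Finset (Fin m)) : Matrix D (Fin n) ℝ :=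
  Matrix.of fun i j => A i.1 j

/-- The KKT matrix `M_D = [[Q, A_Dᵀ],[A_D, 0]]`. -/
noncomputable def MD (Q : Matrix (Fin n) (Fin n) ℝ) (A : Matrix (Fin m) (Fin n) ℝ)
    (D : Finset (Fin m)) : Matrix (Fin n ⊕ D) (Fin n ⊕ D) ℝ :=
  Matrix.fromBlocks Q (subA A D)ᵀ (subA A D) 0

/-- The feasible set of the subproblem `P_D`. -/
def FeasD (A : Matrix (Fin m) (Fin n) ℝ) (D : Finset (Fin m)) (β : D → ℝ) :
    Set (Fin n → ℝ) :=
  {x | ∀ i : D, A i.1 ⬝ᵥ x ≤ β i}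

/-- The optimal set mapping `S_D(c,β)` of the subproblem `P_D(c,β)`. -/
noncomputable def argminD (Q : Matrix (Fin n) (Fin n) ℝ) (A : Matrix (Fin m) (Fin n) ℝ)
    (D : Finset (Fin m)) (c : Fin n → ℝ) (β : D → ℝ) : Set (Fin n → ℝ) :=
  {x | x ∈ FeasD A D β ∧ ∀ y ∈ FeasD A D β, obj Q c x ≤ obj Q c y}

/-- Restriction `b_D` of the right-hand side `b` to the indices in `D`. -/
def restr (b : Fin m → ℝ) (D : Finset (Fin m)) : D → ℝ := fun i => b i.1

/-- `nrm` is a norm on `ℝⁿ`. -/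
structure IsNorm (nrm : (Fin n → ℝ) → ℝ) : Prop where
  definite : ∀ x, nrm x = 0 → x = 0
  smul : ∀ (t : ℝ) (x : Fin n → ℝ), nrm (t • x) = |t| * nrm x
  triangle : ∀ x y, nrm (x + y) ≤ nrm x + nrm y

/-- The dual norm `‖c‖_* = sup {|c'y| : ‖y‖ ≤ 1}`. -/
noncomputable def dualNrm (nrm : (Fin n → ℝ) → ℝ) (c : Fin n → ℝ) : ℝ :=
  sSup {r | ∃ y, nrm y ≤ 1 ∧ r = |c ⬝ᵥ y|}

/-- Distance (with respect to the norm `nrm`) from a point to a set, with `d(x,∅) = +∞`. -/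
noncomputable def dSet (nrm : (Fin n → ℝ) → ℝ) (x : Fin n → ℝ) (S : Set (Fin n → ℝ)) :
    ℝ≥0∞ :=
  ⨅ s ∈ S, ENNReal.ofReal (nrm (x - s))

/-- The distance `max {‖c₁-c₂‖_*, ‖β₁-β₂‖_∞}` in a parameter space `ℝⁿ × ℝ^ι`. -/
noncomputable def pDist (nrm : (Fin n → ℝ) → ℝ) {ι : Type} [Fintype ι]
    (p q : (Fin n → ℝ) × (ι → ℝ)) : ℝ :=
  max (dualNrm nrm (p.1 - q.1)) ‖p.2 - q.2‖

/-- The Aubin property of a set-valued mapping `G` at `(pbar, xbar)`, where the parameter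
space carries the distance `pd` and `ℝⁿ` the norm `nrm`. -/
def AubinAt {P : Type*} [TopologicalSpace P] (nrm : (Fin n → ℝ) → ℝ) (pd : P → P → ℝ)
    (G : P → Set (Fin n → ℝ)) (pbar : P) (xbar : Fin n → ℝ) : Prop :=
  ∃ κ : ℝ, 0 ≤ κ ∧ ∃ V ∈ 𝓝 pbar, ∃ U ∈ 𝓝 xbar,
    ∀ p1 ∈ V, ∀ p2 ∈ V, ∀ x2 ∈ G p2 ∩ U,
      dSet nrm x2 (G p1) ≤ ENNReal.ofReal (κ * pd p2 p1)

/-- The Lipschitz modulus of `G` at `(pbar, xbar)`: the infimum in `[0,+∞]` of all Lipschitz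
constants `κ` in the definition of the Aubin property (`+∞` if the Aubin property fails). -/
noncomputable def lipMod {P : Type*} [TopologicalSpace P] (nrm : (Fin n → ℝ) → ℝ)
    (pd : P → P → ℝ) (G : P → Set (Fin n → ℝ)) (pbar : P) (xbar : Fin n → ℝ) : ℝ≥0∞ :=
  ⨅ κ ∈ {κ : ℝ | 0 ≤ κ ∧ ∃ V ∈ 𝓝 pbar, ∃ U ∈ 𝓝 xbar,
    ∀ p1 ∈ V, ∀ p2 ∈ V, ∀ x2 ∈ G p2 ∩ U,
      dSet nrm x2 (G p1) ≤ ENNReal.ofReal (κ * pd p2 p1)}, ENNReal.ofReal κ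

/-- Strong Lipschitz stability of `G` at `pbar`: single-valuedness in a neighborhood of
`pbar` together with Lipschitz continuity there. -/
def StrongLipStable {P : Type*} [TopologicalSpace P] (nrm : (Fin n → ℝ) → ℝ)
    (pd : P → P → ℝ) (G : P → Set (Fin n → ℝ)) (pbar : P) : Prop :=
  ∃ V ∈ 𝓝 pbar, (∀ p ∈ V, ∃! x, x ∈ G p) ∧
    ∃ κ : ℝ, 0 ≤ κ ∧ ∀ p1 ∈ V, ∀ p2 ∈ V, ∀ x1 ∈ G p1, ∀ x2 ∈ G p2,
      nrm (x1 - x2) ≤ κ * pd p1 p2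

/-- The matrix `(I_n | 0_{n×|D|})`. -/
noncomputable def projMat (n : ℕ) {m : ℕ} (D : Finset (Fin m)) :
    Matrix (Fin n) (Fin n ⊕ D) ℝ :=
  Matrix.fromCols 1 0

/-- Operator norm of a matrix from `(ℝ^ι, ‖·‖_∞)` to `(ℝⁿ, nrm)`. -/
noncomputable def opNormInf (nrm : (Fin n → ℝ) → ℝ) {ι : Type} [Fintype ι]
    (B : Matrix (Fin n) ι ℝ) : ℝ :=
  sSup {r | ∃ v : ι → ℝ, ‖v‖ ≤ 1 ∧ r = nrm (B.mulVec v)}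

/-- Operator norm of a matrix from `(ℝⁿ × ℝ^ι, max {‖·‖_*, ‖·‖_∞})` to `(ℝⁿ, nrm)`. -/
noncomputable def opNormMixed (nrm : (Fin n → ℝ) → ℝ) {ι : Type} [Fintype ι]
    (B : Matrix (Fin n) (Fin n ⊕ ι) ℝ) : ℝ :=
  sSup {r | ∃ (α : Fin n → ℝ) (β : ι → ℝ), dualNrm nrm α ≤ 1 ∧ ‖β‖ ≤ 1 ∧
    r = nrm (B.mulVec (Sum.elim α β))}


/-- The matrix `A_Dᵀ (A_D A_Dᵀ)⁻¹`, which is the two-sided inverse of `A_D` whenever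
`A_D` is square and invertible. -/
noncomputable def pinvA (A : Matrix (Fin m) (Fin n) ℝ) (D : Finset (Fin m)) :
    Matrix (Fin n) D ℝ :=
  (subA A D)ᵀ * ((subA A D) * (subA A D)ᵀ)⁻¹

end QPLip

open QPLip



lemma dot_cont {n : ℕ} (a : Fin n → ℝ) : Continuous fun x : Fin n → ℝ => a ⬝ᵥ x := by
  unfold dotProduct
  exact continuous_finset_sum _ fun j _ => (continuous_const.mul (continuous_apply j))


lemma obj_diff {n : ℕ} (Q : Matrix (Fin n) (Fin n) ℝ) (hQ : Qᵀ = Q) (c x y : Fin n → ℝ) :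
    obj Q c y - obj Q c x
      = (Q.mulVec x + c) ⬝ᵥ (y - x) + (1/2) * ((y - x) ⬝ᵥ Q.mulVec (y - x)) := by
  have hsym : ∀ u v : Fin n → ℝ, u ⬝ᵥ Q.mulVec v = Q.mulVec u ⬝ᵥ v := by
    intro u v
    rw [Matrix.dotProduct_mulVec, ← Matrix.mulVec_transpose, hQ]
  simp only [obj, Matrix.mulVec_sub, dotProduct_sub, sub_dotProduct,
    add_dotProduct]
  have f1 : Q.mulVec x ⬝ᵥ y = Q.mulVec y ⬝ᵥ x := by
    rw [← hsym x y, dotProduct_comm]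
  have f2 : Q.mulVec x ⬝ᵥ x = x ⬝ᵥ Q.mulVec x := dotProduct_comm _ _
  have f3 : y ⬝ᵥ Q.mulVec x = Q.mulVec y ⬝ᵥ x := hsym y x
  have f4 : x ⬝ᵥ Q.mulVec y = Q.mulVec x ⬝ᵥ y := hsym x y
  linarith

lemma kkt_opt {n m : ℕ} (Q : Matrix (Fin n) (Fin n) ℝ) (hQ : Q.PosSemidef)
    (A : Matrix (Fin m) (Fin n) ℝ) (c : Fin n → ℝ) (b : Fin m → ℝ) (x : Fin n → ℝ)
    (hxF : x ∈ Feas A b) (D : Finset (Fin m)) (hD : ↑D ⊆ activeIdx A b x)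
    (hcone : -(Q.mulVec x + c) ∈ coneOf A D) : x ∈ argminSet Q A c b := by
  refine ⟨hxF, fun y hy => ?_⟩
  obtain ⟨lam, hlam, hv⟩ := hcone
  have h1 : (Q.mulVec x + c) ⬝ᵥ (y - x) = ∑ i ∈ D, lam i * (b i - A i ⬝ᵥ y) := by
    have : (Q.mulVec x + c) = -∑ i ∈ D, lam i • A i := by
      rw [← hv]; ring_nf
    have hsd : (∑ i ∈ D, lam i • A i) ⬝ᵥ (y - x) = ∑ i ∈ D, (lam i • A i) ⬝ᵥ (y - x) := by
      simp only [dotProduct, Finset.sum_apply, Finset.sum_mul, Pi.smul_apply]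
      exact Finset.sum_comm
    rw [this, neg_dotProduct, hsd, ← Finset.sum_neg_distrib]
    refine Finset.sum_congr rfl fun i hi => ?_
    have hact : A i ⬝ᵥ x = b i := hD hi
    rw [smul_dotProduct, dotProduct_sub]
    rw [hact]
    simp [smul_eq_mul]
    ring
  have h2 : 0 ≤ (Q.mulVec x + c) ⬝ᵥ (y - x) := by
    rw [h1]
    exact Finset.sum_nonneg fun i hi => mul_nonneg (hlam i) (by linarith [hy i])
  have h3 := hQ.dotProduct_mulVec_nonneg (y - x)
  rw [star_trivial] at h3
  have := obj_diff Q hQ.1 c x y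
  linarith

lemma min_of_pos {n m : ℕ} (A : Matrix (Fin m) (Fin n) ℝ) (D : Finset (Fin m))
    (hli : LinearIndependent ℝ (fun i : D => A i.1)) (lam : Fin m → ℝ)
    (hpos : ∀ i ∈ D, 0 < lam i) (v : Fin n → ℝ) (hv : v = ∑ i ∈ D, lam i • A i) :
    ∀ D' : Finset (Fin m), D' ⊂ D → v ∉ coneOf A D' := by
  rintro D' hss ⟨mu, hmu, hveq⟩
  obtain ⟨j, hjD, hjD'⟩ := Finset.exists_of_ssubset hss
  have hsub : D' ⊆ D := hss.subset
  set g : D → ℝ := fun i => lam i.1 - (if i.1 ∈ D' then mu i.1 else 0) with hg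
  have hsum : ∑ i : D, g i • A i.1 = 0 := by
    have e1 : ∑ i : D, g i • A i.1
        = ∑ i ∈ D, (lam i - if i ∈ D' then mu i else 0) • A i := by
      rw [Finset.univ_eq_attach, Finset.sum_attach D fun i => (lam i - if i ∈ D' then mu i else 0) • A i]
    have e2 : ∑ i ∈ D, (if i ∈ D' then mu i else 0) • A i = ∑ i ∈ D', mu i • A i := by
      simp only [ite_smul, zero_smul]
      rw [← Finset.sum_filter]
      congr 1
      exact Finset.filter_mem_eq_inter.trans (by rw [Finset.inter_eq_right.mpr hsub])
    rw [e1]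
    simp only [sub_smul]
    rw [Finset.sum_sub_distrib, e2, ← hv, ← hveq, sub_self]
  have := Fintype.linearIndependent_iff.mp hli g hsum ⟨j, hjD⟩
  rw [hg] at this
  simp only [if_neg hjD'] at this
  have := hpos j hjD
  linarith [hpos j hjD, this]

lemma li_of_min {n m : ℕ} (A : Matrix (Fin m) (Fin n) ℝ) (D : Finset (Fin m))
    (v : Fin n → ℝ) (hcone : v ∈ coneOf A D)
    (hmin : ∀ D' : Finset (Fin m), D' ⊂ D → v ∉ coneOf A D') :
    LinearIndependent ℝ (fun i : D => A i.1) := by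
  obtain ⟨lam, hlam, hv⟩ := hcone
  by_contra hnli
  obtain ⟨g, hgsum, i0, hgi0⟩ := Fintype.not_linearIndependent_iff.mp hnli
  -- key: any g with ∑ g i • A i = 0 and some positive entry yields contradiction
  have key : ∀ g : D → ℝ, (∑ i : D, g i • A i.1 = 0) → (∃ i : D, 0 < g i) → False := by
    rintro g hgsum ⟨ip, hip⟩
    classical
    set gh : Fin m → ℝ := fun i => if h : i ∈ D then g ⟨i, h⟩ else 0 with hgh
    have hghsum : ∑ i ∈ D, gh i • A i = 0 := by
      rw [← Finset.sum_attach D fun i => gh i • A i]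
      rw [← hgsum, Finset.univ_eq_attach]
      refine Finset.sum_congr rfl fun i _ => ?_
      simp [hgh, dif_pos i.2]
    set T : Finset (Fin m) := D.filter (fun i => 0 < gh i) with hT
    have hTne : T.Nonempty := ⟨ip.1, Finset.mem_filter.mpr ⟨ip.2, by simpa [hgh, dif_pos ip.2] using hip⟩⟩
    obtain ⟨i0, hi0T, hmin0⟩ := T.exists_min_image (fun i => lam i / gh i) hTne
    have hi0D : i0 ∈ D := (Finset.mem_filter.mp hi0T).1
    have hgh0 : 0 < gh i0 := (Finset.mem_filter.mp hi0T).2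
    set t : ℝ := lam i0 / gh i0 with ht
    have ht0 : 0 ≤ t := div_nonneg (hlam i0) hgh0.le
    set lam' : Fin m → ℝ := fun i => lam i - t * gh i with hlam'
    have hlam'nn : ∀ i, 0 ≤ lam' i := by
      intro i
      by_cases hpos : 0 < gh i
      · have hiD : i ∈ D := by
          by_contra hiD
          simp [hgh, dif_neg hiD] at hpos
        have hiT : i ∈ T := Finset.mem_filter.mpr ⟨hiD, hpos⟩
        have := hmin0 i hiT
        have : t * gh i ≤ lam i := by
          rw [ht]
          calc lam i0 / gh i0 * gh i ≤ lam i / gh i * gh i := by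
                exact mul_le_mul_of_nonneg_right (hmin0 i hiT) hpos.le
            _ = lam i := div_mul_cancel₀ _ hpos.ne'
        simp [hlam']; linarith
      · push_neg at hpos
        have : t * gh i ≤ 0 := mul_nonpos_of_nonneg_of_nonpos ht0 hpos
        simp [hlam']; linarith [hlam i]
    have hlam'i0 : lam' i0 = 0 := by
      simp [hlam', ht, div_mul_cancel₀ _ hgh0.ne']
    have hveq : v = ∑ i ∈ D.erase i0, lam' i • A i := by
      rw [Finset.sum_erase _ (by rw [hlam'i0, zero_smul])]
      simp only [hlam', sub_smul]
      rw [Finset.sum_sub_distrib, ← hv]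
      have : ∑ x ∈ D, (t * gh x) • A x = t • ∑ x ∈ D, gh x • A x := by
        rw [Finset.smul_sum]
        exact Finset.sum_congr rfl fun i _ => (smul_smul t (gh i) (A i)).symm
      rw [this, hghsum, smul_zero, sub_zero]
    exact hmin (D.erase i0) (Finset.erase_ssubset hi0D) ⟨lam', hlam'nn, hveq⟩
  rcases lt_trichotomy (g i0) 0 with hneg | hzero | hpos
  · exact key (-g) (by simpa [neg_smul] using congrArg Neg.neg hgsum |>.trans neg_zero) ⟨i0, by simpa using hneg⟩
  · exact hgi0 hzero
  · exact key g hgsum ⟨i0, hpos⟩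

lemma cone_limit {n m : ℕ} (A : Matrix (Fin m) (Fin n) ℝ) (D : Finset (Fin m))
    (hli : LinearIndependent ℝ (fun i : D => A i.1))
    (u : ℕ → (Fin n → ℝ)) (ub : Fin n → ℝ)
    (hu : ∀ r, u r ∈ coneOf A D) (hlim : Tendsto u atTop (𝓝 ub)) :
    ub ∈ coneOf A D := by
  classical
  set f : (D → ℝ) →ₗ[ℝ] (Fin n → ℝ) :=
    { toFun := fun g => ∑ i : D, g i • A i.1
      map_add' := by
        intro g h
        simp only [Pi.add_apply, add_smul, Finset.sum_add_distrib]
      map_smul' := by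
        intro t g
        simp only [Pi.smul_apply, smul_eq_mul, RingHom.id_apply, Finset.smul_sum, smul_smul] } with hf
  have hker : LinearMap.ker f = ⊥ := by
    rw [LinearMap.ker_eq_bot']
    intro g hg
    funext i
    exact Fintype.linearIndependent_iff.mp hli g hg i
  obtain ⟨l, hl⟩ := f.exists_leftInverse_of_injective hker
  have hlf : ∀ g : D → ℝ, l (f g) = g := fun g => by
    have := LinearMap.congr_fun hl g
    simpa using this
  -- coefficients of u r
  have hcoef : ∀ r, (∀ i : D, 0 ≤ l (u r) i) ∧ f (l (u r)) = u r := by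
    intro r
    obtain ⟨lam, hlam, hveq⟩ := hu r
    have hur : u r = f (fun i : D => lam i.1) := by
      rw [hveq, hf]
      simp only [LinearMap.coe_mk, AddHom.coe_mk]
      rw [Finset.univ_eq_attach, Finset.sum_attach D fun i => lam i • A i]
    constructor
    · intro i
      rw [hur, hlf]
      exact hlam i.1
    · rw [hur, hlf]
  have hlcont : Continuous l := l.continuous_of_finiteDimensional
  have hfcont : Continuous f := f.continuous_of_finiteDimensional
  have hLlim : Tendsto (fun r => l (u r)) atTop (𝓝 (l ub)) := (hlcont.tendsto ub).comp hlim
  have hnn : ∀ i : D, 0 ≤ l ub i := by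
    intro i
    have : Tendsto (fun r => l (u r) i) atTop (𝓝 (l ub i)) :=
      ((continuous_apply i).tendsto _).comp hLlim
    exact ge_of_tendsto' this (fun r => (hcoef r).1 i)
  have hub : f (l ub) = ub := by
    have h1 : Tendsto (fun r => f (l (u r))) atTop (𝓝 (f (l ub))) :=
      (hfcont.tendsto _).comp hLlim
    have h2 : Tendsto (fun r => f (l (u r))) atTop (𝓝 ub) := by
      simpa only [fun r => (hcoef r).2] using hlim
    exact tendsto_nhds_unique h1 h2
  refine ⟨fun i => if h : i ∈ D then l ub ⟨i, h⟩ else 0, ?_, ?_⟩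
  · intro i
    by_cases h : i ∈ D
    · simpa [dif_pos h] using hnn ⟨i, h⟩
    · simp [dif_neg h]
  · conv_lhs => rw [← hub]
    show ∑ i : D, l ub i • A i.1 = _
    rw [Finset.univ_eq_attach]
    rw [← Finset.sum_attach D fun i => (if h : i ∈ D then l ub ⟨i, h⟩ else 0) • A i]
    exact Finset.sum_congr rfl fun i _ => by rw [dif_pos i.2]


theorem statement9' {n m : ℕ}
    (Q : Matrix (Fin n) (Fin n) ℝ) (hQ : Q.PosSemidef)
    (A : Matrix (Fin m) (Fin n) ℝ) (cb : Fin n → ℝ) (bb : Fin m → ℝ) (xb : Fin n → ℝ)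
    (hx : xb ∈ argminSet Q A cb bb) :
    (∀ D ∈ ExtKKT Q A cb bb xb, ∃ cs : ℕ → (Fin n → ℝ),
      Filter.Tendsto cs Filter.atTop (𝓝 cb) ∧
      ∀ r : ℕ, xb ∈ argminSet Q A (cs r) bb ∧ D ∈ MinKKT Q A (cs r) bb xb) ∧
    ExtKKT Q A cb bb xb =
      {D : Finset (Fin m) | ∃ (p : ℕ → (Fin n → ℝ) × (Fin m → ℝ)) (xs : ℕ → (Fin n → ℝ)),
        Filter.Tendsto p Filter.atTop (𝓝 (cb, bb)) ∧
        Filter.Tendsto xs Filter.atTop (𝓝 xb) ∧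
        ∀ r : ℕ, xs r ∈ argminSet Q A (p r).1 (p r).2 ∧
          D ∈ MinKKT Q A (p r).1 (p r).2 (xs r)} := by
  have part1 : ∀ D ∈ ExtKKT Q A cb bb xb, ∃ cs : ℕ → (Fin n → ℝ),
      Filter.Tendsto cs Filter.atTop (𝓝 cb) ∧
      ∀ r : ℕ, xb ∈ argminSet Q A (cs r) bb ∧ D ∈ MinKKT Q A (cs r) bb xb := by
    intro D hD
    obtain ⟨hDact, hli, lam, hlam, hv⟩ := hD
    set w : Fin n → ℝ := ∑ i ∈ D, A i with hw
    refine ⟨fun r => cb - ((r : ℝ) + 1)⁻¹ • w, ?_, ?_⟩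
    · have h1 : Tendsto (fun r : ℕ => ((r : ℝ) + 1)⁻¹) atTop (𝓝 0) := by
        simpa [one_div] using tendsto_one_div_add_atTop_nhds_zero_nat (𝕜 := ℝ)
      have h2 : Tendsto (fun r : ℕ => ((r : ℝ) + 1)⁻¹ • w) atTop (𝓝 ((0 : ℝ) • w)) :=
        h1.smul_const w
      rw [zero_smul] at h2
      simpa using (tendsto_const_nhds (x := cb) (f := atTop)).sub h2
    · intro r
      set ε : ℝ := ((r : ℝ) + 1)⁻¹ with hε
      have hεpos : 0 < ε := by positivity
      set lam' : Fin m → ℝ := fun i => lam i + ε with hlam'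
      have hlam'nn : ∀ i, 0 ≤ lam' i := fun i => add_nonneg (hlam i) hεpos.le
      have hconeEq : -(Q.mulVec xb + (cb - ε • w)) = ∑ i ∈ D, lam' i • A i := by
        have e1 : -(Q.mulVec xb + (cb - ε • w)) = -(Q.mulVec xb + cb) + ε • w := by
          abel
        rw [e1, hv, hw]
        erw [Finset.smul_sum]
        rw [← Finset.sum_add_distrib]
        exact Finset.sum_congr rfl fun i _ => (add_smul (lam i) ε (A i)).symm
      have hcone : -(Q.mulVec xb + (cb - ε • w)) ∈ coneOf A D :=
        ⟨lam', hlam'nn, hconeEq⟩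
      have hmin : ∀ D' : Finset (Fin m), D' ⊂ D →
          -(Q.mulVec xb + (cb - ε • w)) ∉ coneOf A D' :=
        min_of_pos A D hli lam' (fun i _ => lt_of_lt_of_le hεpos (by simp [hlam', hlam i]))
          _ hconeEq
      exact ⟨kkt_opt Q hQ A _ bb xb hx.1 D hDact hcone, hDact, hcone, hmin⟩
  refine ⟨part1, ?_⟩
  ext D
  constructor
  · intro hD
    obtain ⟨cs, hcs, hall⟩ := part1 D hD
    refine ⟨fun r => (cs r, bb), fun _ => xb, ?_, tendsto_const_nhds, fun r => hall r⟩
    exact hcs.prodMk_nhds tendsto_const_nhds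
  · rintro ⟨p, xs, hp, hxs, hall⟩
    have hc : Tendsto (fun r => (p r).1) atTop (𝓝 cb) :=
      (continuous_fst.tendsto _).comp hp
    have hb : Tendsto (fun r => (p r).2) atTop (𝓝 bb) :=
      (continuous_snd.tendsto _).comp hp
    have hli : LinearIndependent ℝ (fun i : D => A i.1) :=
      li_of_min A D _ (hall 0).2.2.1 (hall 0).2.2.2
    have hact : ↑D ⊆ activeIdx A bb xb := by
      intro i hiD
      have hiD' : i ∈ D := hiD
      have t1 : Tendsto (fun r => A i ⬝ᵥ xs r) atTop (𝓝 (A i ⬝ᵥ xb)) :=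
        ((dot_cont (A i)).tendsto _).comp hxs
      have t2 : Tendsto (fun r => A i ⬝ᵥ xs r) atTop (𝓝 (bb i)) := by
        have : ∀ r, A i ⬝ᵥ xs r = (p r).2 i := fun r => (hall r).2.1 hiD'
        rw [funext this]
        exact ((continuous_apply i).tendsto _).comp hb
      exact tendsto_nhds_unique t1 t2
    refine ⟨hact, hli, ?_⟩
    have hQc : Continuous fun x : Fin n → ℝ => Q.mulVec x :=
      LinearMap.continuous_of_finiteDimensional Q.mulVecLin
    have hulim : Tendsto (fun r => -(Q.mulVec (xs r) + (p r).1)) atTop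
        (𝓝 (-(Q.mulVec xb + cb))) :=
      (((hQc.tendsto _).comp hxs).add hc).neg
    exact cone_limit A D hli _ _ (fun r => (hall r).2.2.1) hulim

/-- if `0 ∉ conv{aᵢ : i ∈ I_{b̄}(x̄)}` then every `D ∈ L_{c̄,b̄}(x̄)` arises as
`D ∈ M_{c^r,b̄}(x̄)` for a sequence `c^r → c̄`, and `L_{c̄,b̄}(x̄)` equals the
Painlevé–Kuratowski upper limit of `M_{c,b}(x)` along `gph S` at `((c̄,b̄),x̄)`. -/
theorem statement9 {n m : ℕ} (hn : 0 < n) (hm : 0 < m)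
    (Q : Matrix (Fin n) (Fin n) ℝ) (hQ : Q.PosSemidef)
    (A : Matrix (Fin m) (Fin n) ℝ) (cb : Fin n → ℝ) (bb : Fin m → ℝ) (xb : Fin n → ℝ)
    (hx : xb ∈ argminSet Q A cb bb)
    (h0 : (0 : Fin n → ℝ) ∉ convexHull ℝ ((fun i => A i) '' activeIdx A bb xb)) :
    (∀ D ∈ ExtKKT Q A cb bb xb, ∃ cs : ℕ → (Fin n → ℝ),
      Filter.Tendsto cs Filter.atTop (𝓝 cb) ∧
      ∀ r : ℕ, xb ∈ argminSet Q A (cs r) bb ∧ D ∈ MinKKT Q A (cs r) bb xb) ∧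
    ExtKKT Q A cb bb xb =
      {D : Finset (Fin m) | ∃ (p : ℕ → (Fin n → ℝ) × (Fin m → ℝ)) (xs : ℕ → (Fin n → ℝ)),
        Filter.Tendsto p Filter.atTop (𝓝 (cb, bb)) ∧
        Filter.Tendsto xs Filter.atTop (𝓝 xb) ∧
        ∀ r : ℕ, xs r ∈ argminSet Q A (p r).1 (p r).2 ∧
          D ∈ MinKKT Q A (p r).1 (p r).2 (xs r)} :=
  statement9' Q hQ A cb bb xb hx
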